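/- In a polymatrix game on an undirected simple graph G on the player set [N], for any joint strategy π and any two distinct non-adjacent players i and j, the best average deviation gain of the coalition {i, j} is at most the larger of the two players' unilateral deviation gains: max_{(â_i, â_j) ∈ 𝒜_i × 𝒜_j} (1/2) Σ_{k∈{i,j}} E_{a∼π}[𝒰_k(â_i, â_j, a_{−{i,j}}) − 𝒰_k(a)] ≤ max_{k∈{i,j}} max_{â_k∈𝒜_k} E_{a∼π}[𝒰_k(â_k, a_{−k}) − 𝒰_k(a)]. Consequently, the coalition exploitability over all coalitions of size at most two equals the coalition exploitability over singletons together with pairs of adjacent players. -/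
import Mathlib


open Finset

/-- A probability distribution on a finite type. -/
def IsDist {X : Type*} [Fintype X] (p : X → ℝ) : Prop :=
  (∀ x, 0 ≤ p x) ∧ ∑ x, p x = 1

/-- The joint action obtained from `a` by replacing its `S`-coordinates with those of `dev`. -/
def replaceProfile {N : ℕ} {A : Fin N → Type} (S : Finset (Fin N))
    (dev a : (i : Fin N) → A i) : (i : Fin N) → A i :=
  fun i => if i ∈ S then dev i else a i

/-- Utility of player `k` in the polymatrix game on graph `G` with pairwise utilities `W`. -/
noncomputable def polyU {N : ℕ} {A : Fin N → Type} [∀ i, Fintype (A i)]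
    (G : SimpleGraph (Fin N)) [DecidableRel G.Adj]
    (W : ∀ i j : Fin N, A i → A j → ℝ) (k : Fin N) (a : (i : Fin N) → A i) : ℝ :=
  ∑ l ∈ Finset.univ.filter (G.Adj k), W k l (a k) (a l)

/-- Coalition exploitability with respect to a family of coalitions given as a set. -/
noncomputable def CEset {N : ℕ} {A : Fin N → Type} [∀ i, Fintype (A i)]
    (U : Fin N → ((i : Fin N) → A i) → ℝ) (𝒮 : Set (Finset (Fin N)))
    (π : ((i : Fin N) → A i) → ℝ) : ℝ :=
  sSup {x | ∃ S ∈ 𝒮, ∃ dev : (i : Fin N) → A i,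
    x = (S.card : ℝ)⁻¹ * ∑ i ∈ S, ∑ a, π a * (U i (replaceProfile S dev a) - U i a)}

section Aux
variable {N : ℕ} {A : Fin N → Type} [∀ i, Fintype (A i)]
  (G : SimpleGraph (Fin N)) [DecidableRel G.Adj]
  (W : ∀ i j : Fin N, A i → A j → ℝ)

lemma polyU_congr (k : Fin N) {a b : (i : Fin N) → A i}
    (hk : a k = b k) (h : ∀ l, G.Adj k l → a l = b l) :
    polyU G W k a = polyU G W k b := by
  unfold polyU
  apply Finset.sum_congr rfl
  intro l hl
  rw [Finset.mem_filter] at hl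
  rw [hk, h l hl.2]

lemma polyU_update_of_not_adj (k l : Fin N) (hkl : k ≠ l) (h : ¬ G.Adj k l)
    (f : (i : Fin N) → A i) (x : A l) :
    polyU G W k (Function.update f l x) = polyU G W k f := by
  apply polyU_congr
  · exact Function.update_of_ne hkl x f
  · intro m hm
    have hml : m ≠ l := fun he => h (he ▸ hm)
    exact Function.update_of_ne hml x f

lemma polyU_pair_of_not_adj (k l : Fin N) (h : ¬ G.Adj k l)
    (dev a : (i : Fin N) → A i) :
    polyU G W k (replaceProfile {k, l} dev a) = polyU G W k (replaceProfile {k} dev a) := by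
  apply polyU_congr
  · simp [replaceProfile]
  · intro m hm
    have hmk : m ≠ k := fun he => G.irrefl (he ▸ hm)
    have hml : m ≠ l := fun he => h (he ▸ hm)
    simp [replaceProfile, hmk, hml]

lemma polyU_bound (hW : ∀ i j, G.Adj i j → ∀ x y, W i j x y ∈ Set.Icc (0:ℝ) 1)
    (k : Fin N) (a : (i : Fin N) → A i) : polyU G W k a ∈ Set.Icc (0:ℝ) N := by
  constructor
  · exact Finset.sum_nonneg fun l hl => (hW k l (Finset.mem_filter.mp hl).2 _ _).1
  · calc polyU G W k a ≤ ∑ _l ∈ Finset.univ.filter (G.Adj k), (1:ℝ) :=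
        Finset.sum_le_sum fun l hl => (hW k l (Finset.mem_filter.mp hl).2 _ _).2
    _ = ((Finset.univ.filter (G.Adj k)).card : ℝ) := by simp
    _ ≤ ((Finset.univ : Finset (Fin N)).card : ℝ) := by
        exact_mod_cast Finset.card_filter_le _ _
    _ = N := by simp

lemma gain_bound (hW : ∀ i j, G.Adj i j → ∀ x y, W i j x y ∈ Set.Icc (0:ℝ) 1)
    (π : ((i : Fin N) → A i) → ℝ) (hπ : IsDist π)
    (k : Fin N) (f : ((i : Fin N) → A i) → ((i : Fin N) → A i)) :
    ∑ a, π a * (polyU G W k (f a) - polyU G W k a) ≤ N := by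
  calc ∑ a, π a * (polyU G W k (f a) - polyU G W k a)
      ≤ ∑ a, π a * N := by
        apply Finset.sum_le_sum
        intro a _
        apply mul_le_mul_of_nonneg_left _ (hπ.1 a)
        have h1 := polyU_bound G W hW k (f a)
        have h2 := polyU_bound G W hW k a
        have := h1.2; have := h2.1
        linarith
    _ = N := by rw [← Finset.sum_mul, hπ.2, one_mul]

end Aux

/-- In a polymatrix game, for any two distinct non-adjacent players `i`, `j`, the best
average deviation gain of the coalition `{i,j}` is at most the larger of the two players'
unilateral deviation gains; consequently the coalition exploitability over all coalitions
of size at most two equals that over singletons together with adjacent pairs. -/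
theorem stmt12 {N : ℕ} {A : Fin N → Type} [∀ i, Fintype (A i)] [∀ i, DecidableEq (A i)]
    [∀ i, Nonempty (A i)]
    (G : SimpleGraph (Fin N)) [DecidableRel G.Adj]
    (W : ∀ i j : Fin N, A i → A j → ℝ)
    (hW : ∀ i j, G.Adj i j → ∀ x y, W i j x y ∈ Set.Icc (0 : ℝ) 1)
    (π : ((i : Fin N) → A i) → ℝ) (hπ : IsDist π)
    (i j : Fin N) (hij : i ≠ j) (hadj : ¬ G.Adj i j) :
    ((Finset.univ : Finset (A i × A j)).sup' Finset.univ_nonempty fun p =>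
        (1 / 2 : ℝ) *
          ((∑ a, π a * (polyU G W i (Function.update (Function.update a i p.1) j p.2) -
              polyU G W i a)) +
            ∑ a, π a * (polyU G W j (Function.update (Function.update a i p.1) j p.2) -
              polyU G W j a)) ≤
      max
        ((Finset.univ : Finset (A i)).sup' Finset.univ_nonempty fun b =>
          ∑ a, π a * (polyU G W i (Function.update a i b) - polyU G W i a))
        ((Finset.univ : Finset (A j)).sup' Finset.univ_nonempty fun b =>
          ∑ a, π a * (polyU G W j (Function.update a j b) - polyU G W j a))) ∧
    CEset (polyU G W) {S | S.Nonempty ∧ S.card ≤ 2} π =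
      CEset (polyU G W)
        {S | (∃ k, S = {k}) ∨ ∃ k l, G.Adj k l ∧ S = ({k, l} : Finset (Fin N))} π := by
  have hadj' : ¬ G.Adj j i := fun h => hadj h.symm
  constructor
  · obtain ⟨p⟩ : Nonempty (A i × A j) := inferInstance
    have hX : ∀ a : (k : Fin N) → A k,
        polyU G W i (Function.update (Function.update a i p.1) j p.2)
          = polyU G W i (Function.update a i p.1) :=
      fun a => polyU_update_of_not_adj G W i j hij hadj _ _
    have hY : ∀ a : (k : Fin N) → A k,
        polyU G W j (Function.update (Function.update a i p.1) j p.2)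
          = polyU G W j (Function.update a j p.2) := by
      intro a
      rw [Function.update_comm hij]
      exact polyU_update_of_not_adj G W j i hij.symm hadj' _ _
    have h1 : (∑ a, π a * (polyU G W i (Function.update a i p.1) - polyU G W i a)) ≤
        (Finset.univ : Finset (A i)).sup' Finset.univ_nonempty fun b =>
          ∑ a, π a * (polyU G W i (Function.update a i b) - polyU G W i a) :=
      Finset.le_sup' (fun b => ∑ a, π a * (polyU G W i (Function.update a i b) - polyU G W i a))
        (Finset.mem_univ p.1)
    have h2 : (∑ a, π a * (polyU G W j (Function.update a j p.2) - polyU G W j a)) ≤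
        (Finset.univ : Finset (A j)).sup' Finset.univ_nonempty fun b =>
          ∑ a, π a * (polyU G W j (Function.update a j b) - polyU G W j a) :=
      Finset.le_sup' (fun b => ∑ a, π a * (polyU G W j (Function.update a j b) - polyU G W j a))
        (Finset.mem_univ p.2)
    have hp : (1 / 2 : ℝ) *
          ((∑ a, π a * (polyU G W i (Function.update (Function.update a i p.1) j p.2) -
              polyU G W i a)) +
            ∑ a, π a * (polyU G W j (Function.update (Function.update a i p.1) j p.2) -
              polyU G W j a)) ≤
        max
          ((Finset.univ : Finset (A i)).sup' Finset.univ_nonempty fun b =>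
            ∑ a, π a * (polyU G W i (Function.update a i b) - polyU G W i a))
          ((Finset.univ : Finset (A j)).sup' Finset.univ_nonempty fun b =>
            ∑ a, π a * (polyU G W j (Function.update a j b) - polyU G W j a)) := by
      simp only [hX, hY]
      have h3 := le_max_left
          ((Finset.univ : Finset (A i)).sup' Finset.univ_nonempty fun b =>
            ∑ a, π a * (polyU G W i (Function.update a i b) - polyU G W i a))
          ((Finset.univ : Finset (A j)).sup' Finset.univ_nonempty fun b =>
            ∑ a, π a * (polyU G W j (Function.update a j b) - polyU G W j a))
      have h4 := le_max_right
          ((Finset.univ : Finset (A i)).sup' Finset.univ_nonempty fun b =>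
            ∑ a, π a * (polyU G W i (Function.update a i b) - polyU G W i a))
          ((Finset.univ : Finset (A j)).sup' Finset.univ_nonempty fun b =>
            ∑ a, π a * (polyU G W j (Function.update a j b) - polyU G W j a))
      linarith
    exact Finset.le_sup' (α := Prop) _ (Finset.mem_univ p) hp
  · unfold CEset
    set val : Finset (Fin N) → ((k : Fin N) → A k) → ℝ := fun S dev =>
      (S.card : ℝ)⁻¹ * ∑ k ∈ S, ∑ a, π a *
        (polyU G W k (replaceProfile S dev a) - polyU G W k a) with hval
    set T1 : Set ℝ := {x | ∃ S ∈ {S : Finset (Fin N) | S.Nonempty ∧ S.card ≤ 2},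
      ∃ dev : (k : Fin N) → A k, x = val S dev} with hT1
    set T2 : Set ℝ := {x | ∃ S ∈ {S : Finset (Fin N) | (∃ k, S = {k}) ∨
        ∃ k l, G.Adj k l ∧ S = ({k, l} : Finset (Fin N))},
      ∃ dev : (k : Fin N) → A k, x = val S dev} with hT2
    have hvbound : ∀ (S : Finset (Fin N)) (dev : (k : Fin N) → A k), val S dev ≤ N := by
      intro S dev
      rcases eq_or_ne S ∅ with rfl | hSne
      · simp [hval]
      · have hg : ∀ k ∈ S, ∑ a, π a *
            (polyU G W k (replaceProfile S dev a) - polyU G W k a) ≤ N :=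
          fun k _ => gain_bound G W hW π hπ k _
        have hsum : ∑ k ∈ S, ∑ a, π a *
            (polyU G W k (replaceProfile S dev a) - polyU G W k a) ≤ (S.card : ℝ) * N := by
          calc _ ≤ ∑ _k ∈ S, (N : ℝ) := Finset.sum_le_sum hg
          _ = (S.card : ℝ) * N := by rw [Finset.sum_const, nsmul_eq_mul]
        have hcard : (0:ℝ) < (S.card : ℝ) := by
          have := Finset.card_pos.mpr (Finset.nonempty_of_ne_empty hSne)
          exact_mod_cast this
        rw [hval]
        calc (S.card : ℝ)⁻¹ * ∑ k ∈ S, ∑ a, π a *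
            (polyU G W k (replaceProfile S dev a) - polyU G W k a)
            ≤ (S.card : ℝ)⁻¹ * ((S.card : ℝ) * N) :=
              mul_le_mul_of_nonneg_left hsum (inv_nonneg.mpr hcard.le)
          _ = N := by rw [← mul_assoc, inv_mul_cancel₀ hcard.ne', one_mul]
    have hbdd1 : BddAbove T1 := ⟨N, by rintro x ⟨S, _, dev, rfl⟩; exact hvbound S dev⟩
    have hbdd2 : BddAbove T2 := ⟨N, by rintro x ⟨S, _, dev, rfl⟩; exact hvbound S dev⟩
    have dev0 : (k : Fin N) → A k := Classical.arbitrary _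
    have hne1 : T1.Nonempty :=
      ⟨val {i} dev0, {i}, ⟨Finset.singleton_nonempty i, by simp⟩, dev0, rfl⟩
    have hne2 : T2.Nonempty := ⟨val {i} dev0, {i}, Or.inl ⟨i, rfl⟩, dev0, rfl⟩
    have hsub : T2 ⊆ T1 := by
      rintro x ⟨S, hS, dev, rfl⟩
      refine ⟨S, ?_, dev, rfl⟩
      rcases hS with ⟨k, rfl⟩ | ⟨k, l, hkl, rfl⟩
      · exact ⟨Finset.singleton_nonempty k, by simp⟩
      · exact ⟨Finset.insert_nonempty k {l}, (Finset.card_insert_le _ _).trans (by simp)⟩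
    apply le_antisymm
    · apply csSup_le hne1
      rintro x ⟨S, ⟨hSne, hS2⟩, dev, rfl⟩
      have h1 : 1 ≤ S.card := Finset.card_pos.mpr hSne
      have hc : S.card = 1 ∨ S.card = 2 := by omega
      rcases hc with hc | hc
      · obtain ⟨k, rfl⟩ := Finset.card_eq_one.mp hc
        exact le_csSup hbdd2 ⟨{k}, Or.inl ⟨k, rfl⟩, dev, rfl⟩
      · obtain ⟨k, l, hkl, rfl⟩ := Finset.card_eq_two.mp hc
        by_cases hA : G.Adj k l
        · exact le_csSup hbdd2 ⟨{k, l}, Or.inr ⟨k, l, hA, rfl⟩, dev, rfl⟩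
        · have hA' : ¬ G.Adj l k := fun h => hA h.symm
          have hcard2 : (({k, l} : Finset (Fin N)).card : ℝ) = 2 := by
            rw [Finset.card_pair hkl]; norm_num
          have hgk : ∑ a, π a * (polyU G W k (replaceProfile {k, l} dev a) - polyU G W k a)
              = val {k} dev := by
            simp only [hval, Finset.card_singleton, Nat.cast_one, inv_one, one_mul,
              Finset.sum_singleton]
            exact Finset.sum_congr rfl fun a _ => by
              rw [polyU_pair_of_not_adj G W k l hA dev a]
          have hgl : ∑ a, π a * (polyU G W l (replaceProfile {k, l} dev a) - polyU G W l a)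
              = val {l} dev := by
            simp only [hval, Finset.card_singleton, Nat.cast_one, inv_one, one_mul,
              Finset.sum_singleton]
            refine Finset.sum_congr rfl fun a _ => ?_
            rw [show ({k, l} : Finset (Fin N)) = {l, k} from Finset.pair_comm k l,
              polyU_pair_of_not_adj G W l k hA' dev a]
          have hxk : val {k} dev ≤ sSup T2 :=
            le_csSup hbdd2 ⟨{k}, Or.inl ⟨k, rfl⟩, dev, rfl⟩
          have hxl : val {l} dev ≤ sSup T2 :=
            le_csSup hbdd2 ⟨{l}, Or.inl ⟨l, rfl⟩, dev, rfl⟩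
          have hx : val {k, l} dev = (2:ℝ)⁻¹ * (val {k} dev + val {l} dev) := by
            rw [hval]
            simp only [hcard2]
            rw [Finset.sum_pair hkl, hgk, hgl]
          rw [hx]
          linarith
    · exact csSup_le_csSup hbdd1 hne2 hsub
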